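/- Suppose V : (0,∞) → ℝ is twice differentiable, V(S) > 0 for all S > 0, V solves the perpetual American put variational inequality, and V(S) → E as S → 0⁺. Then: (i) if V(S₀) = max(E−S₀, 0) for some S₀ > 0, then V(S) = max(E−S, 0) = E−S for every 0 < S < S₀; (ii) if V(S₁) > max(E−S₁, 0) for some S₁ > 0, then V(S) > max(E−S, 0) for every S > S₁. -/

import Mathlib

/-- The Black–Scholes ordinary differential operator `(−LV)(S)`,
expressed via explicitly given first and second derivative functions. -/
noncomputable def negL (r q σ : ℝ) (V V' V'' : ℝ → ℝ) (S : ℝ) : ℝ :=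
  -(σ ^ 2 / 2) * S ^ 2 * V'' S - (r - q) * S * V' S + r * V S


open Set Filter

noncomputable def coef (μ ν : ℝ) (f f' : ℝ → ℝ) (S : ℝ) : ℝ :=
  S ^ (-μ) * (ν * f S - S * f' S) / (ν - μ)

noncomputable def wfun (E : ℝ) : ℝ → ℝ := fun x => E - x
noncomputable def wfun' : ℝ → ℝ := fun _ => -1
noncomputable def wfun'' : ℝ → ℝ := fun _ => 0

lemma coef_hasDerivAt (s r q σ μ ν : ℝ) (hs : s = σ^2/2) (hsne : s ≠ 0) (hne : ν ≠ μ)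
    (hprod : s * (μ * ν) = -r) (hsum : s * (μ + ν) = s - (r - q))
    (f f' f'' : ℝ → ℝ) (S : ℝ) (hS : 0 < S)
    (hf : HasDerivAt f (f' S) S) (hf' : HasDerivAt f' (f'' S) S) :
    HasDerivAt (coef μ ν f f')
      (S ^ (-μ - 1) * negL r q σ f f' f'' S / (s * (ν - μ))) S := by
  have h1 : HasDerivAt (fun x : ℝ => x ^ (-μ)) (-μ * S ^ (-μ - 1)) S :=
    Real.hasDerivAt_rpow_const (Or.inl hS.ne')
  have h2 : HasDerivAt (fun x => ν * f x - x * f' x)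
      (ν * f' S - (1 * f' S + S * f'' S)) S :=
    (hf.const_mul ν).sub ((hasDerivAt_id S).mul hf')
  have h3 := (h1.mul h2).div_const (ν - μ)
  refine h3.congr_deriv ?_
  symm
  have hpow : S ^ (-μ) = S ^ (-μ - 1) * S := by
    rw [Real.rpow_sub hS, Real.rpow_one, div_mul_cancel₀ _ hS.ne']
  rw [hpow, negL, ← hs]
  have hνμ : ν - μ ≠ 0 := sub_ne_zero.2 hne
  have hsνμ : s * (ν - μ) ≠ 0 := mul_ne_zero hsne hνμ
  rw [div_eq_div_iff hsνμ hνμ]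
  linear_combination ((ν - μ) * S ^ (-μ - 1) * f S) * hprod
    - ((ν - μ) * S ^ (-μ - 1) * S * f' S) * hsum

lemma coef_add (μ ν : ℝ) (hne : ν ≠ μ) (f f' : ℝ → ℝ) (S : ℝ) (hS : 0 < S) :
    coef μ ν f f' S * S ^ μ + coef ν μ f f' S * S ^ ν = f S := by
  unfold coef
  have h1 : S ^ (-μ) * S ^ μ = 1 := by rw [← Real.rpow_add hS]; simp
  have h2 : S ^ (-ν) * S ^ ν = 1 := by rw [← Real.rpow_add hS]; simp
  have hνμ : ν - μ ≠ 0 := sub_ne_zero.2 hne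
  have hμν : μ - ν ≠ 0 := sub_ne_zero.2 (Ne.symm hne)
  rw [div_mul_eq_mul_div, div_mul_eq_mul_div]
  have e1 : S ^ (-μ) * (ν * f S - S * f' S) * S ^ μ = ν * f S - S * f' S := by
    rw [mul_comm (S ^ (-μ)) _, mul_assoc, h1, mul_one]
  have e2 : S ^ (-ν) * (μ * f S - S * f' S) * S ^ ν = μ * f S - S * f' S := by
    rw [mul_comm (S ^ (-ν)) _, mul_assoc, h2, mul_one]
  rw [e1, e2]
  field_simp
  ring

lemma eq_on_Icc_of_deriv_zero {g : ℝ → ℝ} {x y : ℝ} (hxy : x ≤ y)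
    (hcont : ContinuousOn g (Set.Icc x y))
    (hderiv : ∀ t ∈ Set.Ico x y, HasDerivAt g 0 t) : g y = g x :=
  constant_of_has_deriv_right_zero hcont
    (fun t ht => (hderiv t ht).hasDerivWithinAt) y (right_mem_Icc.2 hxy)

lemma const_of_deriv_zero_Ioo {g : ℝ → ℝ} {a b : ℝ} (ha : 0 < a) (hab : a < b)
    (hcont : ∀ x : ℝ, 0 < x → ContinuousAt g x)
    (hderiv : ∀ x ∈ Set.Ioo a b, HasDerivAt g 0 x) : g a = g b := by
  set m := (a + b) / 2 with hm
  have ham : a < m := by simp only [hm]; linarith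
  have hmb : m < b := by simp only [hm]; linarith
  have hstep : ∀ x y : ℝ, a < x → x ≤ y → y < b → g y = g x := by
    intro x y hax hxy hyb
    refine eq_on_Icc_of_deriv_zero hxy ?_ ?_
    · exact fun t ht => (hcont t (ha.trans (hax.trans_le ht.1))).continuousWithinAt
    · exact fun t ht => hderiv t ⟨hax.trans_le ht.1, ht.2.trans_le hyb.le⟩
  have hga : g a = g m := by
    have h1 : Filter.Tendsto g (nhdsWithin a (Set.Ioo a m)) (nhds (g a)) :=
      (hcont a ha).continuousWithinAt
    have h2 : Filter.Tendsto g (nhdsWithin a (Set.Ioo a m)) (nhds (g m)) := by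
      refine Filter.Tendsto.congr' ?_ tendsto_const_nhds
      filter_upwards [self_mem_nhdsWithin] with t ht
      exact hstep t m ht.1 ht.2.le hmb
    have hne : (nhdsWithin a (Set.Ioo a m)).NeBot := by
      rw [← mem_closure_iff_nhdsWithin_neBot, closure_Ioo ham.ne]
      exact left_mem_Icc.2 ham.le
    exact tendsto_nhds_unique h1 h2
  have hgb : g b = g m := by
    have h1 : Filter.Tendsto g (nhdsWithin b (Set.Ioo m b)) (nhds (g b)) :=
      (hcont b (ha.trans hab)).continuousWithinAt
    have h2 : Filter.Tendsto g (nhdsWithin b (Set.Ioo m b)) (nhds (g m)) := by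
      refine Filter.Tendsto.congr' ?_ tendsto_const_nhds
      filter_upwards [self_mem_nhdsWithin] with t ht
      exact (hstep m t ham ht.1.le ht.2).symm
    have hne : (nhdsWithin b (Set.Ioo m b)).NeBot := by
      rw [← mem_closure_iff_nhdsWithin_neBot, closure_Ioo hmb.ne]
      exact right_mem_Icc.2 hmb.le
    exact tendsto_nhds_unique h1 h2
  rw [hga, hgb]

lemma tangency_contradiction (r q σ E s lp lm : ℝ)
    (hr : 0 < r) (hq : 0 ≤ q) (hσ : 0 < σ) (hE : 0 < E)
    (hs : s = σ^2/2) (hs0 : 0 < s)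
    (hprod : s * (lp * lm) = -r) (hsum : s * (lp + lm) = s - (r - q))
    (hlt : lm < lp)
    (a b : ℝ) (ha : 0 < a) (hab : a < b)
    (hA : coef lp lm (wfun E) wfun' a = coef lp lm (wfun E) wfun' b)
    (hB : coef lm lp (wfun E) wfun' a = coef lm lp (wfun E) wfun' b) : False := by
  have hsne : s ≠ 0 := hs0.ne'
  have hwD : ∀ x : ℝ, HasDerivAt (wfun E) (wfun' x) x := fun x => by
    exact ((hasDerivAt_id x).const_sub E).congr_deriv (by simp [wfun'])
  have hwD' : ∀ x : ℝ, HasDerivAt wfun' (wfun'' x) x := fun x => hasDerivAt_const x (-1)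
  have hnegLw : ∀ x : ℝ, negL r q σ (wfun E) wfun' wfun'' x = r*E - q*x := by
    intro x; simp [negL, wfun, wfun', wfun'']; ring
  have hprod' : s * (lm * lp) = -r := by rw [mul_comm lm lp]; exact hprod
  have hsum' : s * (lm + lp) = s - (r - q) := by rw [add_comm lm lp]; exact hsum
  have hAw : ∀ x : ℝ, 0 < x → HasDerivAt (coef lp lm (wfun E) wfun')
      (x ^ (-lp - 1) * (r*E - q*x) / (s * (lm - lp))) x := by
    intro x hx
    have h := coef_hasDerivAt s r q σ lp lm hs hsne hlt.ne hprod hsum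
      (wfun E) wfun' wfun'' x hx (hwD x) (hwD' x)
    rwa [hnegLw x] at h
  have hBw : ∀ x : ℝ, 0 < x → HasDerivAt (coef lm lp (wfun E) wfun')
      (x ^ (-lm - 1) * (r*E - q*x) / (s * (lp - lm))) x := by
    intro x hx
    have h := coef_hasDerivAt s r q σ lm lp hs hsne hlt.ne' hprod' hsum'
      (wfun E) wfun' wfun'' x hx (hwD x) (hwD' x)
    rwa [hnegLw x] at h
  rcases eq_or_lt_of_le hq with hq0 | hq0
  · -- q = 0
    have hstrict : StrictAntiOn (coef lp lm (wfun E) wfun') (Set.Icc a b) := by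
      apply strictAntiOn_of_deriv_neg (convex_Icc a b)
      · exact fun x hx => ((hAw x (ha.trans_le hx.1)).continuousAt).continuousWithinAt
      · intro x hx
        rw [interior_Icc] at hx
        have hx0 : 0 < x := ha.trans hx.1
        rw [(hAw x hx0).deriv]
        apply div_neg_of_pos_of_neg
        · have hre : r*E - q*x = r*E := by rw [← hq0]; ring
          rw [hre]
          exact mul_pos (Real.rpow_pos_of_pos hx0 _) (by positivity)
        · exact mul_neg_of_pos_of_neg hs0 (by linarith)
    have h1 := hstrict (left_mem_Icc.2 hab.le) (right_mem_Icc.2 hab.le) hab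
    rw [hA] at h1
    exact lt_irrefl _ h1
  · -- q > 0
    set z := r*E/q with hz
    have hz0 : 0 < z := by positivity
    set e := lp - lm with he
    have he0 : 0 < e := sub_pos.2 hlt
    set K := fun x : ℝ => coef lm lp (wfun E) wfun' x + z^e * coef lp lm (wfun E) wfun' x with hK
    set kd := fun x : ℝ => x ^ (-lm - 1) * (r*E - q*x) / (s * (lp - lm))
      + z^e * (x ^ (-lp - 1) * (r*E - q*x) / (s * (lm - lp))) with hkd
    have hKd : ∀ x : ℝ, 0 < x → HasDerivAt K (kd x) x := fun x hx =>
      (hBw x hx).add ((hAw x hx).const_mul (z^e))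
    have hkd_eq : ∀ x : ℝ, 0 < x →
        kd x = q * (z - x) * (x^e - z^e) * x ^ (-lp - 1) / (s * e) := by
      intro x hx
      have hsplit : x ^ (-lm - 1) = x ^ (-lp - 1) * x ^ e := by
        rw [← Real.rpow_add hx]
        congr 1
        simp only [he]
        ring
      have hq1 : r*E - q*x = q*(z - x) := by
        rw [hz, mul_sub, mul_div_assoc', mul_comm q (r*E), mul_div_assoc, div_self hq0.ne', mul_one]
      rw [hkd]
      simp only
      rw [hsplit, hq1, he]
      have h1 : lp - lm ≠ 0 := sub_ne_zero.2 hlt.ne'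
      have h2 : lm - lp ≠ 0 := sub_ne_zero.2 hlt.ne
      field_simp
      ring
    have hsz : z^e ≤ z^e := le_refl _
    have hkd_nonpos : ∀ x : ℝ, 0 < x → kd x ≤ 0 := by
      intro x hx
      rw [hkd_eq x hx]
      apply div_nonpos_of_nonpos_of_nonneg _ (mul_pos hs0 he0).le
      have hxp : 0 < x ^ (-lp - 1) := Real.rpow_pos_of_pos hx _
      rcases lt_trichotomy x z with h | h | h
      · have hee : x^e < z^e := Real.rpow_lt_rpow hx.le h he0
        have : q * (z - x) * (x^e - z^e) ≤ 0 :=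
          mul_nonpos_of_nonneg_of_nonpos (by nlinarith) (by linarith)
        exact mul_nonpos_of_nonpos_of_nonneg this hxp.le
      · rw [h]; simp
      · have hee : z^e < x^e := Real.rpow_lt_rpow hz0.le h he0
        have : q * (z - x) * (x^e - z^e) ≤ 0 :=
          mul_nonpos_of_nonpos_of_nonneg (by nlinarith) (by linarith)
        exact mul_nonpos_of_nonpos_of_nonneg this hxp.le
    have hkd_neg : ∀ x : ℝ, 0 < x → x ≠ z → kd x < 0 := by
      intro x hx hne
      rw [hkd_eq x hx]
      apply div_neg_of_neg_of_pos _ (mul_pos hs0 he0)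
      have hxp : 0 < x ^ (-lp - 1) := Real.rpow_pos_of_pos hx _
      rcases lt_or_gt_of_ne hne with h | h
      · have hee : x^e < z^e := Real.rpow_lt_rpow hx.le h he0
        have : q * (z - x) * (x^e - z^e) < 0 :=
          mul_neg_of_pos_of_neg (by nlinarith) (by linarith)
        exact mul_neg_of_neg_of_pos this hxp
      · have hee : z^e < x^e := Real.rpow_lt_rpow hz0.le h he0
        have : q * (z - x) * (x^e - z^e) < 0 :=
          mul_neg_of_neg_of_pos (by nlinarith) (by linarith)
        exact mul_neg_of_neg_of_pos this hxp
    have hKab : K a = K b := by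
      simp only [hK]
      rw [hA, hB]
    have hKcont : ContinuousOn K (Set.Icc a b) :=
      fun x hx => ((hKd x (ha.trans_le hx.1)).continuousAt).continuousWithinAt
    have hKanti : AntitoneOn K (Set.Icc a b) := by
      apply antitoneOn_of_deriv_nonpos (convex_Icc a b) hKcont
      · intro x hx
        rw [interior_Icc] at hx
        exact ((hKd x (ha.trans hx.1)).differentiableAt).differentiableWithinAt
      · intro x hx
        rw [interior_Icc] at hx
        have hx0 : 0 < x := ha.trans hx.1
        rw [(hKd x hx0).deriv]
        exact hkd_nonpos x hx0
    have hKconst : ∀ x ∈ Set.Icc a b, K x = K a := by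
      intro x hx
      have h1 : K x ≤ K a := hKanti (left_mem_Icc.2 hab.le) hx hx.1
      have h2 : K b ≤ K x := hKanti hx (right_mem_Icc.2 hab.le) hx.2
      rw [← hKab] at h2
      linarith
    set m := (a + b) / 2 with hm
    rcases le_or_gt z m with hzm | hzm
    · set p := (m + b) / 2 with hp
      have hmb : m < b := by simp only [hm]; linarith
      have hap : a < p := by simp only [hp, hm]; linarith
      have hpb : p < b := by simp only [hp, hm]; linarith
      have hstrict : StrictAntiOn K (Set.Icc p b) := by
        apply strictAntiOn_of_deriv_neg (convex_Icc p b)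
        · exact fun x hx => ((hKd x (ha.trans (hap.trans_le hx.1))).continuousAt).continuousWithinAt
        · intro x hx
          rw [interior_Icc] at hx
          have hx0 : 0 < x := ha.trans (hap.trans hx.1)
          rw [(hKd x hx0).deriv]
          refine hkd_neg x hx0 ?_
          have : z < x := by
            calc z ≤ m := hzm
            _ < p := by simp only [hp]; linarith
            _ < x := hx.1
          exact this.ne'
      have h1 := hstrict (left_mem_Icc.2 hpb.le) (right_mem_Icc.2 hpb.le) hpb
      rw [hKconst p ⟨hap.le, hpb.le⟩, hKconst b (right_mem_Icc.2 hab.le)] at h1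
      exact lt_irrefl _ h1
    · set p := (a + m) / 2 with hp
      have ham : a < m := by simp only [hm]; linarith
      have hap : a < p := by simp only [hp]; linarith
      have hpm : p < m := by simp only [hp]; linarith
      have hpb : p < b := by
        have hmb : m < b := by simp only [hm]; linarith
        linarith
      have hstrict : StrictAntiOn K (Set.Icc a p) := by
        apply strictAntiOn_of_deriv_neg (convex_Icc a p)
        · exact fun x hx => ((hKd x (ha.trans_le hx.1)).continuousAt).continuousWithinAt
        · intro x hx
          rw [interior_Icc] at hx
          have hx0 : 0 < x := ha.trans hx.1
          rw [(hKd x hx0).deriv]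
          refine hkd_neg x hx0 ?_
          have : x < z := by
            calc x < p := hx.2
            _ < m := hpm
            _ < z := hzm
          exact this.ne
      have h1 := hstrict (left_mem_Icc.2 hap.le) (right_mem_Icc.2 hap.le) hap
      rw [hKconst a (left_mem_Icc.2 hab.le), hKconst p ⟨hap.le, hpb.le⟩] at h1
      exact lt_irrefl _ h1

/-- For a positive solution `V` of the perpetual American put variational inequality with
`V(S) → E` as `S → 0⁺`: (i) if `V(S₀) = (E−S₀)⁺` for some `S₀ > 0` then
`V(S) = (E−S)⁺ = E−S` for all `0 < S < S₀`; (ii) if `V(S₁) > (E−S₁)⁺` for some `S₁ > 0`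
then `V(S) > (E−S)⁺` for all `S > S₁`. -/
theorem stopping_and_continuation_regions
    (r q σ E : ℝ) (hr : 0 < r) (hq : 0 ≤ q) (hσ : 0 < σ) (hE : 0 < E)
    (V V' V'' : ℝ → ℝ)
    (hV' : ∀ S : ℝ, 0 < S → HasDerivAt V (V' S) S)
    (hV'' : ∀ S : ℝ, 0 < S → HasDerivAt V' (V'' S) S)
    (hpos : ∀ S : ℝ, 0 < S → 0 < V S)
    (hVI : ∀ S : ℝ, 0 < S →
      min (negL r q σ V V' V'' S) (V S - max (E - S) 0) = 0)
    (hlim : Filter.Tendsto V (nhdsWithin 0 (Set.Ioi 0)) (nhds E)) :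
    (∀ S₀ : ℝ, 0 < S₀ → V S₀ = max (E - S₀) 0 →
      ∀ S : ℝ, 0 < S → S < S₀ → V S = max (E - S) 0 ∧ max (E - S) 0 = E - S) ∧
    (∀ S₁ : ℝ, 0 < S₁ → max (E - S₁) 0 < V S₁ →
      ∀ S : ℝ, S₁ < S → max (E - S) 0 < V S) := by
  classical
  have hs0 : (0:ℝ) < σ^2/2 := by positivity
  set s : ℝ := σ^2/2 with hs
  have hΔ : 0 < (r - q - s)^2 + 4*s*r := by nlinarith
  set d : ℝ := Real.sqrt ((r - q - s)^2 + 4*s*r) with hd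
  have hd2 : d^2 = (r - q - s)^2 + 4*s*r := Real.sq_sqrt hΔ.le
  have hdpos : 0 < d := Real.sqrt_pos.2 hΔ
  set lp : ℝ := (-(r - q - s) + d)/(2*s) with hlp_def
  set lm : ℝ := (-(r - q - s) - d)/(2*s) with hlm_def
  have hsum : s * (lp + lm) = s - (r - q) := by
    rw [hlp_def, hlm_def, ← add_div, mul_div_assoc', div_eq_iff (mul_ne_zero two_ne_zero hs0.ne')]
    ring
  have hprod : s * (lp * lm) = -r := by
    rw [hlp_def, hlm_def, div_mul_div_comm, mul_div_assoc',
      div_eq_iff (mul_ne_zero (mul_ne_zero two_ne_zero hs0.ne') (mul_ne_zero two_ne_zero hs0.ne'))]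
    linear_combination (-s) * hd2
  have hlt : lm < lp :=
    div_lt_div_of_pos_right (by linarith) (by positivity)
  have hlpm_neg : lp * lm < 0 := by nlinarith
  have hlp_pos : 0 < lp := by nlinarith
  have hlm_neg : lm < 0 := by nlinarith
  have hprod' : s * (lm * lp) = -r := by rw [mul_comm lm lp]; exact hprod
  have hsum' : s * (lm + lp) = s - (r - q) := by rw [add_comm lm lp]; exact hsum
  -- extraction from the variational inequality
  have hge : ∀ S : ℝ, 0 < S → max (E - S) 0 ≤ V S := by
    intro S hS
    have h := hVI S hS
    have h2 := min_le_right (negL r q σ V V' V'' S) (V S - max (E - S) 0)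
    rw [h] at h2
    linarith
  have hnegL0 : ∀ S : ℝ, 0 < S → max (E - S) 0 < V S → negL r q σ V V' V'' S = 0 := by
    intro S hS hlt'
    rcases min_eq_iff.1 (hVI S hS) with h | h
    · exact h.1
    · linarith [h.1]
  -- derivatives of the coefficient functionals of V
  have hcAd : ∀ x : ℝ, 0 < x → HasDerivAt (coef lp lm V V')
      (x ^ (-lp - 1) * negL r q σ V V' V'' x / (s * (lm - lp))) x := fun x hx =>
    coef_hasDerivAt s r q σ lp lm hs hs0.ne' hlt.ne hprod hsum V V' V'' x hx (hV' x hx) (hV'' x hx)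
  have hcBd : ∀ x : ℝ, 0 < x → HasDerivAt (coef lm lp V V')
      (x ^ (-lm - 1) * negL r q σ V V' V'' x / (s * (lp - lm))) x := fun x hx =>
    coef_hasDerivAt s r q σ lm lp hs hs0.ne' hlt.ne' hprod' hsum' V V' V'' x hx (hV' x hx) (hV'' x hx)
  have hcA0 : ∀ x : ℝ, 0 < x → negL r q σ V V' V'' x = 0 → HasDerivAt (coef lp lm V V') 0 x := by
    intro x hx h0
    have h := hcAd x hx
    rw [h0] at h
    simpa using h
  have hcB0 : ∀ x : ℝ, 0 < x → negL r q σ V V' V'' x = 0 → HasDerivAt (coef lm lp V V') 0 x := by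
    intro x hx h0
    have h := hcBd x hx
    rw [h0] at h
    simpa using h
  have hVcont : ∀ x : ℝ, 0 < x → ContinuousAt V x := fun x hx => (hV' x hx).continuousAt
  -- S₀ is below the strike
  have keyE : ∀ S₀ : ℝ, 0 < S₀ → V S₀ = max (E - S₀) 0 → S₀ < E := by
    intro S₀ h1 h2
    by_contra hcon
    push_neg at hcon
    have h3 := hpos S₀ h1
    rw [h2, max_eq_right (by linarith)] at h3
    exact lt_irrefl 0 h3
  -- the key statement
  have key : ∀ S₀ : ℝ, 0 < S₀ → V S₀ = max (E - S₀) 0 → ∀ S : ℝ, 0 < S → S < S₀ → V S = E - S := by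
    intro S₀ hS₀ hV0 c hc hcS₀
    have hS₀E : S₀ < E := keyE S₀ hS₀ hV0
    have hVS₀ : V S₀ = E - S₀ := by rw [hV0, max_eq_left (by linarith)]
    by_contra hne
    have hcE : c < E := hcS₀.trans hS₀E
    set Z := {x : ℝ | x ∈ Set.Icc c S₀ ∧ V x = E - x} with hZ
    have hZclosed : IsClosed Z := by
      have hZeq : Z = Set.Icc c S₀ ∩ (fun x => V x - (E - x)) ⁻¹' {0} := by
        ext x
        simp [hZ, sub_eq_zero]
      rw [hZeq]
      apply ContinuousOn.preimage_isClosed_of_isClosed ?_ isClosed_Icc isClosed_singleton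
      intro x hx
      exact ((hVcont x (hc.trans_le hx.1)).sub (by fun_prop)).continuousWithinAt
    have hZne : Z.Nonempty := ⟨S₀, ⟨hcS₀.le, le_refl _⟩, hVS₀⟩
    have hZbdd : BddBelow Z := ⟨c, fun x hx => hx.1.1⟩
    set b := sInf Z with hb
    have hbZ : b ∈ Z := hZclosed.csInf_mem hZne hZbdd
    have hcb : c < b := by
      rcases lt_or_eq_of_le hbZ.1.1 with h | h
      · exact h
      · exact absurd (h ▸ hbZ.2) hne
    have hbS₀ : b ≤ S₀ := hbZ.1.2
    have hb0 : 0 < b := hc.trans hcb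
    have hnotZ : ∀ x : ℝ, c ≤ x → x < b → V x ≠ E - x := by
      intro x h1 h2 heq
      have : b ≤ x := csInf_le hZbdd ⟨⟨h1, h2.le.trans hbS₀⟩, heq⟩
      linarith
    by_cases hL : ∃ x : ℝ, x ∈ Set.Ioc 0 c ∧ V x = E - x
    · -- interior component (a, b): double tangency contradiction
      obtain ⟨x₀, hx₀, hVx₀⟩ := hL
      set Z₂ := {x : ℝ | x ∈ Set.Icc x₀ c ∧ V x = E - x} with hZ₂
      have hZ₂closed : IsClosed Z₂ := by
        have hZeq : Z₂ = Set.Icc x₀ c ∩ (fun x => V x - (E - x)) ⁻¹' {0} := by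
          ext x
          simp [hZ₂, sub_eq_zero]
        rw [hZeq]
        apply ContinuousOn.preimage_isClosed_of_isClosed ?_ isClosed_Icc isClosed_singleton
        intro x hx
        exact ((hVcont x (hx₀.1.trans_le hx.1)).sub (by fun_prop)).continuousWithinAt
      have hZ₂ne : Z₂.Nonempty := ⟨x₀, ⟨le_refl _, hx₀.2⟩, hVx₀⟩
      have hZ₂bdd : BddAbove Z₂ := ⟨c, fun x hx => hx.1.2⟩
      set a := sSup Z₂ with haa
      have haZ : a ∈ Z₂ := hZ₂closed.csSup_mem hZ₂ne hZ₂bdd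
      have ha0 : 0 < a := hx₀.1.trans_le haZ.1.1
      have hac : a < c := by
        rcases lt_or_eq_of_le haZ.1.2 with h | h
        · exact h
        · exact absurd (h ▸ haZ.2) hne
      have hab : a < b := hac.trans hcb
      have hmidpos : ∀ x : ℝ, x ∈ Set.Ioo a b → E - x < V x := by
        rintro x ⟨h1, h2⟩
        have hx0 : 0 < x := ha0.trans h1
        refine lt_of_le_of_ne (le_trans (le_max_left _ _) (hge x hx0)) (Ne.symm ?_)
        rcases le_or_gt x c with h3 | h3
        · intro heq
          have : x ≤ a := le_csSup hZ₂bdd ⟨⟨(haZ.1.1.trans h1.le), h3⟩, heq⟩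
          linarith
        · exact hnotZ x h3.le h2
      have hmid0 : ∀ x ∈ Set.Ioo a b, negL r q σ V V' V'' x = 0 := by
        intro x hx
        have hx0 : 0 < x := ha0.trans hx.1
        have hxE : x < E := lt_of_lt_of_le hx.2 (hbS₀.trans hS₀E.le)
        apply hnegL0 x hx0
        rw [max_eq_left (by linarith)]
        exact hmidpos x hx
      -- tangency at points where V touches the payoff
      have hu : ∀ p : ℝ, 0 < p → V p = E - p → V' p = -1 := by
        intro p hp hVp
        have hDu : HasDerivAt (fun x => V x - (E - x)) (V' p - (-1)) p :=
          (hV' p hp).sub ((hasDerivAt_id p).const_sub E)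
        have hmin : IsLocalMin (fun x => V x - (E - x)) p := by
          have hev : ∀ᶠ x in nhds p, (0:ℝ) < x := eventually_gt_nhds hp
          refine Filter.Eventually.mono hev ?_
          intro x hx
          have h1 := hge x hx
          have h2 : E - x ≤ max (E - x) 0 := le_max_left _ _
          simp only [hVp]
          simp only [sub_self]
          linarith
        have hz := hmin.hasDerivAt_eq_zero hDu
        linarith
      have hV'a : V' a = -1 := hu a ha0 haZ.2
      have hV'b : V' b = -1 := hu b hb0 hbZ.2
      have hAc : coef lp lm V V' a = coef lp lm V V' b :=
        const_of_deriv_zero_Ioo ha0 hab (fun x hx => (hcAd x hx).continuousAt)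
          (fun x hx => hcA0 x (ha0.trans hx.1) (hmid0 x hx))
      have hBc : coef lm lp V V' a = coef lm lp V V' b :=
        const_of_deriv_zero_Ioo ha0 hab (fun x hx => (hcBd x hx).continuousAt)
          (fun x hx => hcB0 x (ha0.trans hx.1) (hmid0 x hx))
      have eA : ∀ p : ℝ, V p = E - p → V' p = -1 →
          coef lp lm V V' p = coef lp lm (wfun E) wfun' p := by
        intro p h1 h2
        simp only [coef, wfun, wfun', h1, h2]
      have eB : ∀ p : ℝ, V p = E - p → V' p = -1 →
          coef lm lp V V' p = coef lm lp (wfun E) wfun' p := by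
        intro p h1 h2
        simp only [coef, wfun, wfun', h1, h2]
      refine tangency_contradiction r q σ E s lp lm hr hq hσ hE hs hs0 hprod hsum hlt a b ha0 hab ?_ ?_
      · rw [← eA a haZ.2 hV'a, ← eA b hbZ.2 hV'b]
        exact hAc
      · rw [← eB a haZ.2 hV'a, ← eB b hbZ.2 hV'b]
        exact hBc
    · -- left component reaches 0 : contradiction with V → E
      push_neg at hL
      have hopos : ∀ x : ℝ, x ∈ Set.Ioo (0:ℝ) b → E - x < V x := by
        rintro x ⟨h1, h2⟩
        refine lt_of_le_of_ne (le_trans (le_max_left _ _) (hge x h1)) (Ne.symm ?_)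
        rcases le_or_gt x c with h3 | h3
        · exact hL x ⟨h1, h3⟩
        · exact hnotZ x h3.le h2
      have hop0 : ∀ x ∈ Set.Ioo (0:ℝ) b, negL r q σ V V' V'' x = 0 := by
        intro x hx
        have hxE : x < E := lt_of_lt_of_le hx.2 (hbS₀.trans hS₀E.le)
        apply hnegL0 x hx.1
        rw [max_eq_left (by linarith)]
        exact hopos x hx
      set A := coef lp lm V V' c with hA
      set B := coef lm lp V V' c with hB
      have hconst : ∀ x : ℝ, x ∈ Set.Ioc (0:ℝ) c →
          coef lp lm V V' x = A ∧ coef lm lp V V' x = B := by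
        rintro x ⟨h1, h2⟩
        constructor
        · refine (eq_on_Icc_of_deriv_zero h2 ?_ ?_).symm
          · exact fun t ht => ((hcAd t (h1.trans_le ht.1)).continuousAt).continuousWithinAt
          · intro t ht
            exact hcA0 t (h1.trans_le ht.1) (hop0 t ⟨h1.trans_le ht.1, ht.2.trans hcb⟩)
        · refine (eq_on_Icc_of_deriv_zero h2 ?_ ?_).symm
          · exact fun t ht => ((hcBd t (h1.trans_le ht.1)).continuousAt).continuousWithinAt
          · intro t ht
            exact hcB0 t (h1.trans_le ht.1) (hop0 t ⟨h1.trans_le ht.1, ht.2.trans hcb⟩)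
      have hVeq : ∀ x : ℝ, x ∈ Set.Ioc (0:ℝ) c → V x = A * x^lp + B * x^lm := by
        intro x hx
        have h := coef_add lp lm hlt.ne V V' x hx.1
        rw [(hconst x hx).1, (hconst x hx).2] at h
        linarith
      have hmem : Set.Ioc (0:ℝ) c ∈ nhdsWithin (0:ℝ) (Set.Ioi 0) :=
        Ioc_mem_nhdsGT_of_mem ⟨le_refl 0, hc⟩
      have htp : Tendsto (fun x : ℝ => x ^ lp) (nhdsWithin 0 (Set.Ioi 0)) (nhds 0) := by
        have hca : ContinuousAt (fun x : ℝ => x ^ lp) 0 :=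
          Real.continuousAt_rpow_const 0 lp (Or.inr hlp_pos.le)
        have h := hca.tendsto
        rw [Real.zero_rpow hlp_pos.ne'] at h
        exact h.mono_left nhdsWithin_le_nhds
      have htm : Tendsto (fun x : ℝ => x ^ (-lm)) (nhdsWithin 0 (Set.Ioi 0)) (nhds 0) := by
        have hca : ContinuousAt (fun x : ℝ => x ^ (-lm)) 0 :=
          Real.continuousAt_rpow_const 0 (-lm) (Or.inr (by linarith))
        have h := hca.tendsto
        rw [Real.zero_rpow (by linarith : -lm ≠ 0)] at h
        exact h.mono_left nhdsWithin_le_nhds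
      have htB : Tendsto (fun x : ℝ => B * x^lm) (nhdsWithin 0 (Set.Ioi 0)) (nhds E) := by
        have h1 : Tendsto (fun x : ℝ => V x - A * x^lp) (nhdsWithin 0 (Set.Ioi 0)) (nhds (E - A * 0)) :=
          hlim.sub (htp.const_mul A)
        rw [mul_zero, sub_zero] at h1
        refine h1.congr' ?_
        filter_upwards [hmem] with x hx
        rw [hVeq x hx]
        ring
      by_cases hB0 : B = 0
      · rw [hB0] at htB
        simp only [zero_mul] at htB
        have := tendsto_nhds_unique htB tendsto_const_nhds
        linarith
      · have ht1 : Tendsto (fun x : ℝ => x ^ lm) (nhdsWithin 0 (Set.Ioi 0)) (nhds (B⁻¹ * E)) := by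
          have h := htB.const_mul B⁻¹
          refine h.congr ?_
          intro x
          field_simp
        have ht2 := ht1.mul htm
        rw [mul_zero] at ht2
        have hev1 : (fun x : ℝ => x^lm * x^(-lm)) =ᶠ[nhdsWithin (0:ℝ) (Set.Ioi 0)] (fun _ => (1:ℝ)) := by
          filter_upwards [self_mem_nhdsWithin] with x hx
          rw [← Real.rpow_add hx]
          simp
        have ht3 : Tendsto (fun _ : ℝ => (1:ℝ)) (nhdsWithin 0 (Set.Ioi 0)) (nhds 0) :=
          Tendsto.congr' hev1 ht2
        have := tendsto_nhds_unique ht3 tendsto_const_nhds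
        linarith
  -- conclude
  constructor
  · intro S₀ h1 h2 S hS hSS₀
    have hS₀E : S₀ < E := keyE S₀ h1 h2
    have hmax : max (E - S) 0 = E - S := max_eq_left (by linarith)
    exact ⟨by rw [key S₀ h1 h2 S hS hSS₀, hmax], hmax⟩
  · intro S₁ hS₁ hgt S hS₁S
    by_contra hcon
    push_neg at hcon
    have hS : 0 < S := hS₁.trans hS₁S
    have hVS : V S = max (E - S) 0 := le_antisymm hcon (hge S hS)
    have h1 := key S hS hVS S₁ hS₁ hS₁S
    have hSE : S < E := keyE S hS hVS
    rw [max_eq_left (by linarith : (0:ℝ) ≤ E - S₁)] at hgt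
    rw [h1] at hgt
    exact lt_irrefl _ hgt
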